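/- Let n ≥ 3 be odd, let R be the quotient ring ℤ[a,b]/(ab, aⁿ − bⁿ), and let x and y denote the images of a and b in R. Let f be a ring automorphism of R that maps the additive subgroup ℤx + ℤy bijectively onto itself. Then the pair (f(x), f(y)) is one of (x, y), (−x, −y), (y, x), (−y, −x). -/

import Mathlib

open MvPolynomial

noncomputable def phi0 : MvPolynomial (Fin 2) ℤ →+* Polynomial ℤ :=
  (aeval ![Polynomial.X, 0]).toRingHom

noncomputable def phi1 : MvPolynomial (Fin 2) ℤ →+* Polynomial ℤ :=
  (aeval ![0, Polynomial.X]).toRingHom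

@[simp] lemma phi0_X0 : phi0 (X 0) = Polynomial.X := by simp [phi0]
@[simp] lemma phi0_X1 : phi0 (X 1) = 0 := by simp [phi0]
@[simp] lemma phi1_X0 : phi1 (X 0) = 0 := by simp [phi1]
@[simp] lemma phi1_X1 : phi1 (X 1) = Polynomial.X := by simp [phi1]
@[simp] lemma phi0_C (r : ℤ) : phi0 (C r) = Polynomial.C r := by
  simp [phi0, algebraMap_int_eq]

lemma coeff0_eq (d : MvPolynomial (Fin 2) ℤ) : (phi0 d).coeff 0 = (phi1 d).coeff 0 := by
  have : (Polynomial.evalRingHom 0).comp phi0 = (Polynomial.evalRingHom 0).comp phi1 := by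
    apply MvPolynomial.ringHom_ext
    · intro r; simp [phi0, phi1, algebraMap_int_eq]
    · intro i; fin_cases i <;> simp
  simp only [Polynomial.coeff_zero_eq_eval_zero]
  exact congrArg (fun g => g d) this

@[simp] lemma phi1_C (r : ℤ) : phi1 (C r) = Polynomial.C r := by
  simp [phi1, algebraMap_int_eq]

lemma key1 (n k : ℕ) (hk1 : 1 ≤ k) (hk : k < n) (p q : ℤ)
    (h : (C p * X 0 ^ k + C q * X 1 ^ k : MvPolynomial (Fin 2) ℤ) ∈
      Ideal.span {X 0 * X 1, (X 0 : MvPolynomial (Fin 2) ℤ) ^ n - X 1 ^ n}) :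
    p = 0 ∧ q = 0 := by
  obtain ⟨c, d, hcd⟩ := Ideal.mem_span_pair.mp h
  constructor
  · have h0 := congrArg (fun P => (phi0 P).coeff k) hcd
    simp only [map_add, map_mul, map_sub, map_pow, phi0_X0, phi0_X1, phi0_C] at h0
    simp only [zero_pow (show n ≠ 0 by omega), zero_pow (show k ≠ 0 by omega), mul_zero,
      zero_mul, zero_add, add_zero, sub_zero] at h0
    rw [Polynomial.coeff_mul_X_pow', if_neg (by omega)] at h0
    rw [Polynomial.coeff_C_mul, Polynomial.coeff_X_pow, if_pos rfl] at h0
    simpa using h0.symm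
  · have h0 := congrArg (fun P => (phi1 P).coeff k) hcd
    simp only [map_add, map_mul, map_sub, map_pow, phi1_X0, phi1_X1, phi1_C] at h0
    simp only [zero_pow (show n ≠ 0 by omega), zero_pow (show k ≠ 0 by omega), mul_zero,
      zero_mul, zero_add, add_zero, zero_sub, mul_neg] at h0
    rw [Polynomial.coeff_neg, Polynomial.coeff_mul_X_pow', if_neg (by omega)] at h0
    rw [Polynomial.coeff_C_mul, Polynomial.coeff_X_pow, if_pos rfl] at h0
    simpa using h0.symm

lemma key2 (n : ℕ) (hn : 1 ≤ n) (p q : ℤ)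
    (h : (C p * X 0 ^ n + C q * X 1 ^ n : MvPolynomial (Fin 2) ℤ) ∈
      Ideal.span {X 0 * X 1, (X 0 : MvPolynomial (Fin 2) ℤ) ^ n - X 1 ^ n}) :
    p + q = 0 := by
  obtain ⟨c, d, hcd⟩ := Ideal.mem_span_pair.mp h
  have h0 := congrArg (fun P => (phi0 P).coeff n) hcd
  simp only [map_add, map_mul, map_sub, map_pow, phi0_X0, phi0_X1, phi0_C] at h0
  simp only [zero_pow (show n ≠ 0 by omega), mul_zero, zero_mul, zero_add, add_zero,
    sub_zero] at h0
  rw [Polynomial.coeff_mul_X_pow', if_pos le_rfl, Nat.sub_self] at h0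
  rw [Polynomial.coeff_C_mul, Polynomial.coeff_X_pow, if_pos rfl] at h0
  have h1 := congrArg (fun P => (phi1 P).coeff n) hcd
  simp only [map_add, map_mul, map_sub, map_pow, phi1_X0, phi1_X1, phi1_C] at h1
  simp only [zero_pow (show n ≠ 0 by omega), mul_zero, zero_mul, zero_add, add_zero,
    zero_sub, mul_neg] at h1
  rw [Polynomial.coeff_neg, Polynomial.coeff_mul_X_pow', if_pos le_rfl, Nat.sub_self] at h1
  rw [Polynomial.coeff_C_mul, Polynomial.coeff_X_pow, if_pos rfl] at h1
  have := coeff0_eq d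
  simp only [mul_one, mul_zero, add_zero, zero_add] at h0 h1
  omega

lemma pow_add_eq {R : Type*} [CommRing R] (a b : R) (h : a * b = 0) (m : ℕ) :
    (a + b) ^ (m + 1) = a ^ (m + 1) + b ^ (m + 1) := by
  induction m with
  | zero => simp
  | succ m ih =>
    have : (a + b) ^ (m + 2) = (a + b) ^ (m + 1) * (a + b) := by ring
    rw [this, ih]
    linear_combination (a ^ m + b ^ m) * h

set_option maxHeartbeats 2000000 in
set_option synthInstance.maxHeartbeats 200000 in
theorem stmt_8 (n : ℕ) (hn : 3 ≤ n) (hodd : Odd n)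
    (x y : MvPolynomial (Fin 2) ℤ ⧸
      Ideal.span {X 0 * X 1, (X 0 : MvPolynomial (Fin 2) ℤ) ^ n - X 1 ^ n})
    (hx : x = Ideal.Quotient.mk _ (X 0)) (hy : y = Ideal.Quotient.mk _ (X 1))
    (f : (MvPolynomial (Fin 2) ℤ ⧸
        Ideal.span {X 0 * X 1, (X 0 : MvPolynomial (Fin 2) ℤ) ^ n - X 1 ^ n}) ≃+*
      (MvPolynomial (Fin 2) ℤ ⧸
        Ideal.span {X 0 * X 1, (X 0 : MvPolynomial (Fin 2) ℤ) ^ n - X 1 ^ n}))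
    (hf : (AddSubgroup.closure {x, y}).map (f : _ →+* _).toAddMonoidHom =
      AddSubgroup.closure {x, y}) :
    (f x = x ∧ f y = y) ∨ (f x = -x ∧ f y = -y) ∨
      (f x = y ∧ f y = x) ∨ (f x = -y ∧ f y = -x) := by
  have hxy0 : x * y = 0 := by
    rw [hx, hy, ← map_mul, Ideal.Quotient.eq_zero_iff_mem]
    exact Ideal.subset_span (Set.mem_insert _ _)
  have hxyn : x ^ n = y ^ n := by
    rw [hx, hy, ← map_pow, ← map_pow, Ideal.Quotient.eq]
    exact Ideal.subset_span (Set.mem_insert_iff.mpr (Or.inr rfl))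
  have hC : ∀ r : ℤ, Ideal.Quotient.mk
      (Ideal.span {X 0 * X 1, (X 0 : MvPolynomial (Fin 2) ℤ) ^ n - X 1 ^ n}) (C r)
      = (r : MvPolynomial (Fin 2) ℤ ⧸
      (Ideal.span {X 0 * X 1, (X 0 : MvPolynomial (Fin 2) ℤ) ^ n - X 1 ^ n} :
        Ideal (MvPolynomial (Fin 2) ℤ))) := by
    intro r
    rw [show (C r : MvPolynomial (Fin 2) ℤ) = (r : MvPolynomial (Fin 2) ℤ) from
      eq_intCast MvPolynomial.C r, map_intCast]
  have ind : ∀ (k : ℕ), 1 ≤ k → k < n → ∀ p q : ℤ, p • x ^ k + q • y ^ k = 0 →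
      p = 0 ∧ q = 0 := by
    intro k hk1 hk p q h
    refine key1 n k hk1 hk p q ?_
    rw [← Ideal.Quotient.eq_zero_iff_mem, map_add, map_mul, map_mul, map_pow, map_pow,
      hC, hC, ← hx, ← hy]
    simpa [zsmul_eq_mul] using h
  have indn : ∀ k : ℤ, k • x ^ n = 0 → k = 0 := by
    intro k h
    have h2 : k + 0 = 0 := by
      refine key2 n (by omega) k 0 ?_
      rw [← Ideal.Quotient.eq_zero_iff_mem, map_add, map_mul, map_mul, map_pow, map_pow,
        hC, hC, ← hx, ← hy]
      push_cast
      simpa [zsmul_eq_mul] using h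
    omega
  -- coefficients of f x and f y
  have hfx : f x ∈ AddSubgroup.closure {x, y} := by
    rw [← hf]
    exact AddSubgroup.mem_map.mpr ⟨x, AddSubgroup.subset_closure (Set.mem_insert _ _), rfl⟩
  have hfy : f y ∈ AddSubgroup.closure {x, y} := by
    rw [← hf]
    exact AddSubgroup.mem_map.mpr ⟨y, AddSubgroup.subset_closure
      (Set.mem_insert_iff.mpr (Or.inr rfl)), rfl⟩
  obtain ⟨p, q, hpq⟩ := AddSubgroup.mem_closure_pair.mp hfx
  obtain ⟨r, s, hrs⟩ := AddSubgroup.mem_closure_pair.mp hfy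
  -- preimages of x and y
  have hux : x ∈ (AddSubgroup.closure {x, y}).map (f : _ →+* _).toAddMonoidHom := by
    rw [hf]; exact AddSubgroup.subset_closure (Set.mem_insert _ _)
  have huy : y ∈ (AddSubgroup.closure {x, y}).map (f : _ →+* _).toAddMonoidHom := by
    rw [hf]; exact AddSubgroup.subset_closure (Set.mem_insert_iff.mpr (Or.inr rfl))
  obtain ⟨u, hu, hfu⟩ := AddSubgroup.mem_map.mp hux
  obtain ⟨v, hv, hfv⟩ := AddSubgroup.mem_map.mp huy
  obtain ⟨a1, b1, hab⟩ := AddSubgroup.mem_closure_pair.mp hu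
  obtain ⟨c1, d1, hcd⟩ := AddSubgroup.mem_closure_pair.mp hv
  have hex : (a1 * p + b1 * r) • x + (a1 * q + b1 * s) • y = x := by
    have h0 := congrArg (f.toRingHom.toAddMonoidHom) hab
    rw [map_add, AddMonoidHom.map_zsmul, AddMonoidHom.map_zsmul] at h0
    replace h0 : a1 • f x + b1 • f y = x := h0.trans hfu
    rw [← hpq, ← hrs] at h0
    simp only [zsmul_eq_mul] at h0 ⊢
    push_cast
    linear_combination h0
  have hey : (c1 * p + d1 * r) • x + (c1 * q + d1 * s) • y = y := by
    have h0 := congrArg (f.toRingHom.toAddMonoidHom) hcd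
    rw [map_add, AddMonoidHom.map_zsmul, AddMonoidHom.map_zsmul] at h0
    replace h0 : c1 • f x + d1 • f y = y := h0.trans hfv
    rw [← hpq, ← hrs] at h0
    simp only [zsmul_eq_mul] at h0 ⊢
    push_cast
    linear_combination h0
  obtain ⟨hA, hB⟩ : a1 * p + b1 * r = 1 ∧ a1 * q + b1 * s = 0 := by
    have h1 : (a1 * p + b1 * r - 1) • x ^ 1 + (a1 * q + b1 * s) • y ^ 1 = 0 := by
      simp only [zsmul_eq_mul] at hex ⊢
      push_cast at hex ⊢
      simp only [pow_one]
      linear_combination hex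
    have := ind 1 le_rfl (by omega) _ _ h1
    omega
  obtain ⟨hCq, hD⟩ : c1 * p + d1 * r = 0 ∧ c1 * q + d1 * s = 1 := by
    have h1 : (c1 * p + d1 * r) • x ^ 1 + (c1 * q + d1 * s - 1) • y ^ 1 = 0 := by
      simp only [zsmul_eq_mul] at hey ⊢
      push_cast at hey ⊢
      simp only [pow_one]
      linear_combination hey
    have := ind 1 le_rfl (by omega) _ _ h1
    omega
  -- product relation
  obtain ⟨hpr, hqs⟩ : p * r = 0 ∧ q * s = 0 := by
    have h0 : f x * f y = 0 := by rw [← map_mul, hxy0, map_zero]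
    rw [← hpq, ← hrs] at h0
    have h1 : (p * r) • x ^ 2 + (q * s) • y ^ 2 = 0 := by
      simp only [zsmul_eq_mul] at h0 ⊢
      push_cast
      linear_combination h0 - ((p : _) * s + (q : _) * r) * hxy0
    exact ind 2 (by omega) (by omega) _ _ h1
  -- power relation
  obtain ⟨m, hm⟩ : ∃ m, n = m + 1 := ⟨n - 1, by omega⟩
  have expand : ∀ a b : MvPolynomial (Fin 2) ℤ ⧸
      (Ideal.span {X 0 * X 1, (X 0 : MvPolynomial (Fin 2) ℤ) ^ n - X 1 ^ n} :
        Ideal (MvPolynomial (Fin 2) ℤ)),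
      a * b = 0 → (a + b) ^ n = a ^ n + b ^ n := by
    intro a b h
    have h2 := pow_add_eq a b h m
    rwa [← hm] at h2
  have hLR : (p ^ n) • x ^ n + (q ^ n) • y ^ n = (r ^ n) • x ^ n + (s ^ n) • y ^ n := by
    have hmul1 : (p • x) * (q • y) = 0 := by
      simp only [zsmul_eq_mul]; linear_combination (p : _) * q * hxy0
    have hmul2 : (r • x) * (s • y) = 0 := by
      simp only [zsmul_eq_mul]; linear_combination (r : _) * s * hxy0
    have h0 : f x ^ n = f y ^ n := by rw [← map_pow, ← map_pow, hxyn]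
    rw [← hpq, ← hrs, expand _ _ hmul1, expand _ _ hmul2,
      smul_pow, smul_pow, smul_pow, smul_pow] at h0
    exact h0
  have hpow : p ^ n + q ^ n - r ^ n - s ^ n = 0 := by
    refine indn _ ?_
    simp only [zsmul_eq_mul] at hLR ⊢
    push_cast at hLR ⊢
    linear_combination hLR + ((q : _) ^ n - (s : _) ^ n) * hxyn
  -- final case analysis
  have hfx' : f x = p • x + q • y := hpq.symm
  have hfy' : f y = r • x + s • y := hrs.symm
  have hn0 : n ≠ 0 := by omega
  rcases mul_eq_zero.mp hpr with hp0 | hr0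
  · subst hp0
    rcases mul_eq_zero.mp hqs with hq0 | hs0
    · subst hq0
      exfalso
      have hbr : b1 * r = 1 := by omega
      have hbs : b1 * s = 0 := by omega
      have hb : b1 ≠ 0 := by rintro rfl; omega
      have hs : s = 0 := by
        rcases mul_eq_zero.mp hbs with h | h
        · exact absurd h hb
        · exact h
      subst hs
      omega
    · subst hs0
      have hbr : b1 * r = 1 := by omega
      have hgq : c1 * q = 1 := by omega
      rw [zero_pow hn0] at hpow
      rcases Int.mul_eq_one_iff_eq_one_or_neg_one.mp hbr with ⟨_, hr1⟩ | ⟨_, hr1⟩ <;>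
        rcases Int.mul_eq_one_iff_eq_one_or_neg_one.mp hgq with ⟨_, hq1⟩ | ⟨_, hq1⟩ <;>
        subst hr1 <;> subst hq1
      · right; right; left
        constructor
        · rw [hfx']; simp
        · rw [hfy']; simp
      · exfalso
        simp only [one_pow, hodd.neg_one_pow, zero_pow hn0] at hpow
        omega
      · exfalso
        simp only [one_pow, hodd.neg_one_pow, zero_pow hn0] at hpow
        omega
      · right; right; right
        constructor
        · rw [hfx']; simp
        · rw [hfy']; simp
  · subst hr0
    rcases mul_eq_zero.mp hqs with hq0 | hs0
    · subst hq0
      have hap : a1 * p = 1 := by omega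
      have hds : d1 * s = 1 := by omega
      rw [zero_pow hn0] at hpow
      rcases Int.mul_eq_one_iff_eq_one_or_neg_one.mp hap with ⟨_, hp1⟩ | ⟨_, hp1⟩ <;>
        rcases Int.mul_eq_one_iff_eq_one_or_neg_one.mp hds with ⟨_, hs1⟩ | ⟨_, hs1⟩ <;>
        subst hp1 <;> subst hs1
      · left
        constructor
        · rw [hfx']; simp
        · rw [hfy']; simp
      · exfalso
        simp only [one_pow, hodd.neg_one_pow, zero_pow hn0] at hpow
        omega
      · exfalso
        simp only [one_pow, hodd.neg_one_pow, zero_pow hn0] at hpow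
        omega
      · right; left
        constructor
        · rw [hfx']; simp
        · rw [hfy']; simp
    · subst hs0
      exfalso
      have hap : a1 * p = 1 := by omega
      have haq : a1 * q = 0 := by omega
      have ha : a1 ≠ 0 := by rintro rfl; omega
      have hq : q = 0 := by
        rcases mul_eq_zero.mp haq with h | h
        · exact absurd h ha
        · exact h
      subst hq
      omega
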